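/- Let S be a family of linear subspaces of X, let a ∈ X, a ≠ 0, and set S_a = {Y ∈ S : a ∈ Y}. Then for every f ∈ E_S(X), the translates x ↦ f(x + ra) converge, uniformly on compact subsets of X as r → +∞, to a function τ_a(f) ∈ E_{S_a}(X) with sup-norm ‖τ_a(f)‖ ≤ ‖f‖; the resulting map τ_a : E_S(X) → E_{S_a}(X) is a unital *-algebra homomorphism, and τ_a(f) = f for every f ∈ E_{S_a}(X), so τ_a is a projection of E_S(X) onto the subalgebra E_{S_a}(X). -/

import Mathlib

open MeasureTheory Metric Filter Topology

noncomputable section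

/-- `X d` is the Euclidean space `ℝ^d` with its standard inner product and norm. -/
abbrev X (d : ℕ) : Type := EuclideanSpace ℝ (Fin d)

/-- `h` is a boundary function for `f` : `f` has uniform radial limits at infinity given
(on the unit sphere) by the continuous function `h`. -/
def IsBoundary {E : Type*} [NormedAddCommGroup E] [InnerProductSpace ℝ E]
    (f : E → ℂ) (h : E → ℂ) : Prop :=
  Continuous h ∧
    ∀ ε > 0, ∃ r > 0, ∀ z : E, r ≤ ‖z‖ → ‖f z - h (‖z‖⁻¹ • z)‖ < ε

/-- `f` has uniform radial limits at infinity. -/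
def HasUniformRadialLimits {E : Type*} [NormedAddCommGroup E] [InnerProductSpace ℝ E]
    (f : E → ℂ) : Prop :=
  ∃ h : E → ℂ, IsBoundary f h

/-- The generating set of the algebra `E_S(X)` : functions of the form `g ∘ π_Y` with `Y ∈ S`
and `g` a bounded continuous function on `Y^⊥` having uniform radial limits at infinity. -/
def projGen {E : Type*} [NormedAddCommGroup E] [InnerProductSpace ℝ E]
    [FiniteDimensional ℝ E] (S : Set (Submodule ℝ E)) :
    Set (BoundedContinuousFunction E ℂ) :=
  { f | ∃ Y ∈ S, ∃ g : BoundedContinuousFunction (↥Yᗮ) ℂ,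
      HasUniformRadialLimits ⇑g ∧ ∀ x : E, f x = g (Yᗮ.orthogonalProjection x) }

/-- `E_S(X)` : the smallest closed unital *-subalgebra of `C_b(X)` containing all `g ∘ π_Y`
with `Y ∈ S` and `g` having uniform radial limits at infinity. -/
def ES {E : Type*} [NormedAddCommGroup E] [InnerProductSpace ℝ E]
    [FiniteDimensional ℝ E] (S : Set (Submodule ℝ E)) :
    StarSubalgebra ℂ (BoundedContinuousFunction E ℂ) :=
  (StarAlgebra.adjoin ℂ (projGen S)).topologicalClosure

/-- The translates `x ↦ f(x + ra)` converge to `g` uniformly on compact subsets of `X`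
as `r → +∞`. -/
def TranslatesTendTo {d : ℕ} (a : X d) (f g : BoundedContinuousFunction (X d) ℂ) : Prop :=
  ∀ C : Set (X d), IsCompact C →
    TendstoUniformlyOn (fun (r : ℝ) (x : X d) => f (x + r • a)) (fun x => g x) atTop C

namespace TauProof

variable {d : ℕ}

lemma ttt_iff (a : X d) (f g : BoundedContinuousFunction (X d) ℂ) :
    TranslatesTendTo a f g ↔ ∀ C : Set (X d), IsCompact C → ∀ ε > 0,
      ∀ᶠ r : ℝ in atTop, ∀ x ∈ C, dist (g x) (f (x + r • a)) < ε := by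
  constructor
  · intro h C hC
    exact Metric.tendstoUniformlyOn_iff.mp (h C hC)
  · intro h C hC
    exact Metric.tendstoUniformlyOn_iff.mpr (h C hC)

lemma ttt_tendsto_at {a : X d} {f g : BoundedContinuousFunction (X d) ℂ}
    (h : TranslatesTendTo a f g) (x : X d) :
    Tendsto (fun r : ℝ => f (x + r • a)) atTop (𝓝 (g x)) :=
  (h {x} isCompact_singleton).tendsto_at rfl


lemma ttt_unique {a : X d} {f g₁ g₂ : BoundedContinuousFunction (X d) ℂ}
    (h1 : TranslatesTendTo a f g₁) (h2 : TranslatesTendTo a f g₂) : g₁ = g₂ := by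
  ext x
  exact tendsto_nhds_unique (ttt_tendsto_at h1 x) (ttt_tendsto_at h2 x)

lemma ttt_norm_le {a : X d} {f g : BoundedContinuousFunction (X d) ℂ}
    (h : TranslatesTendTo a f g) : ‖g‖ ≤ ‖f‖ := by
  refine (BoundedContinuousFunction.norm_le (norm_nonneg f)).mpr fun x => ?_
  exact le_of_tendsto (ttt_tendsto_at h x).norm
    (Eventually.of_forall fun r => f.norm_coe_le_norm _)

lemma ttt_of_eq {a : X d} {f : BoundedContinuousFunction (X d) ℂ}
    (h : ∀ (r : ℝ) (x : X d), f (x + r • a) = f x) :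
    TranslatesTendTo a f f := by
  rw [ttt_iff]
  intro C hC ε hε
  filter_upwards with r x hx
  simpa [h] using hε

lemma ttt_add {a : X d} {f₁ f₂ g₁ g₂ : BoundedContinuousFunction (X d) ℂ}
    (h1 : TranslatesTendTo a f₁ g₁) (h2 : TranslatesTendTo a f₂ g₂) :
    TranslatesTendTo a (f₁ + f₂) (g₁ + g₂) := by
  rw [ttt_iff] at h1 h2 ⊢
  intro C hC ε hε
  filter_upwards [h1 C hC (ε / 2) (by positivity), h2 C hC (ε / 2) (by positivity)]
    with r H1 H2 x hx
  simp only [BoundedContinuousFunction.coe_add, Pi.add_apply]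
  calc dist (g₁ x + g₂ x) (f₁ (x + r • a) + f₂ (x + r • a))
      ≤ dist (g₁ x) (f₁ (x + r • a)) + dist (g₂ x) (f₂ (x + r • a)) :=
        dist_add_add_le _ _ _ _
    _ < ε / 2 + ε / 2 := add_lt_add (H1 x hx) (H2 x hx)
    _ = ε := add_halves ε

lemma ttt_neg {a : X d} {f g : BoundedContinuousFunction (X d) ℂ}
    (h : TranslatesTendTo a f g) : TranslatesTendTo a (-f) (-g) := by
  rw [ttt_iff] at h ⊢
  intro C hC ε hε
  filter_upwards [h C hC ε hε] with r H x hx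
  have := H x hx
  simp only [BoundedContinuousFunction.coe_neg, Pi.neg_apply]
  rwa [dist_neg_neg]

lemma ttt_sub {a : X d} {f₁ f₂ g₁ g₂ : BoundedContinuousFunction (X d) ℂ}
    (h1 : TranslatesTendTo a f₁ g₁) (h2 : TranslatesTendTo a f₂ g₂) :
    TranslatesTendTo a (f₁ - f₂) (g₁ - g₂) := by
  simpa [sub_eq_add_neg] using ttt_add h1 (ttt_neg h2)

lemma ttt_star {a : X d} {f g : BoundedContinuousFunction (X d) ℂ}
    (h : TranslatesTendTo a f g) : TranslatesTendTo a (star f) (star g) := by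
  rw [ttt_iff] at h ⊢
  intro C hC ε hε
  filter_upwards [h C hC ε hε] with r H x hx
  have := H x hx
  simp only [dist_eq_norm] at this ⊢
  rw [BoundedContinuousFunction.star_apply, BoundedContinuousFunction.star_apply,
    ← star_sub, norm_star]
  exact this

lemma ttt_mul {a : X d} {f₁ f₂ g₁ g₂ : BoundedContinuousFunction (X d) ℂ}
    (h1 : TranslatesTendTo a f₁ g₁) (h2 : TranslatesTendTo a f₂ g₂) :
    TranslatesTendTo a (f₁ * f₂) (g₁ * g₂) := by
  rw [ttt_iff] at h1 h2 ⊢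
  intro C hC ε hε
  set δ := ε / (‖g₁‖ + ‖f₂‖ + 1) with hδ
  have hδ0 : 0 < δ := by positivity
  filter_upwards [h1 C hC δ hδ0, h2 C hC δ hδ0] with r H1 H2 x hx
  have e1 := H1 x hx
  have e2 := H2 x hx
  simp only [BoundedContinuousFunction.coe_mul, Pi.mul_apply, dist_eq_norm] at e1 e2 ⊢
  have key : g₁ x * g₂ x - f₁ (x + r • a) * f₂ (x + r • a)
      = g₁ x * (g₂ x - f₂ (x + r • a)) + (g₁ x - f₁ (x + r • a)) * f₂ (x + r • a) := by
    ring
  rw [key]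
  calc ‖g₁ x * (g₂ x - f₂ (x + r • a)) + (g₁ x - f₁ (x + r • a)) * f₂ (x + r • a)‖
      ≤ ‖g₁ x‖ * ‖g₂ x - f₂ (x + r • a)‖ + ‖g₁ x - f₁ (x + r • a)‖ * ‖f₂ (x + r • a)‖ := by
        refine (norm_add_le _ _).trans ?_
        rw [norm_mul, norm_mul]
    _ ≤ ‖g₁‖ * δ + δ * ‖f₂‖ := by
        gcongr <;>
          first
            | exact g₁.norm_coe_le_norm x
            | exact e2.le
            | exact e1.le
            | exact f₂.norm_coe_le_norm _
    _ = δ * (‖g₁‖ + ‖f₂‖) := by ring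
    _ < δ * (‖g₁‖ + ‖f₂‖ + 1) := by
        have := mul_lt_mul_of_pos_left (lt_add_one (‖g₁‖ + ‖f₂‖)) hδ0
        linarith
    _ = ε := by
        rw [hδ]
        field_simp

lemma ttt_of_tendsto {a : X d} {f g : BoundedContinuousFunction (X d) ℂ}
    {u v : ℕ → BoundedContinuousFunction (X d) ℂ}
    (hP : ∀ n, TranslatesTendTo a (u n) (v n))
    (hu : Tendsto u atTop (𝓝 f)) (hv : Tendsto v atTop (𝓝 g)) :
    TranslatesTendTo a f g := by
  rw [ttt_iff]
  intro C hC ε hε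
  obtain ⟨n, hn1, hn2⟩ : ∃ n, dist (u n) f < ε / 3 ∧ dist (v n) g < ε / 3 := by
    obtain ⟨n1, hA⟩ := Metric.tendsto_atTop.mp hu (ε / 3) (by positivity)
    obtain ⟨n2, hB⟩ := Metric.tendsto_atTop.mp hv (ε / 3) (by positivity)
    exact ⟨max n1 n2, hA _ (le_max_left _ _), hB _ (le_max_right _ _)⟩
  filter_upwards [(ttt_iff a (u n) (v n)).mp (hP n) C hC (ε / 3) (by positivity)]
    with r H x hx
  calc dist (g x) (f (x + r • a))
      ≤ dist (g x) (v n x) + dist (v n x) (u n (x + r • a))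
        + dist (u n (x + r • a)) (f (x + r • a)) := dist_triangle4 _ _ _ _
    _ < ε / 3 + ε / 3 + ε / 3 := by
        refine add_lt_add (add_lt_add ?_ (H x hx)) ?_
        · exact lt_of_le_of_lt (BoundedContinuousFunction.dist_coe_le_dist x)
            (by rwa [dist_comm] at hn2)
        · exact lt_of_le_of_lt (BoundedContinuousFunction.dist_coe_le_dist _) hn1
    _ = ε := by ring


lemma unit_vec_dist {E : Type*} [NormedAddCommGroup E] [InnerProductSpace ℝ E]
    {z y : E} (hz : z ≠ 0) (hy : y ≠ 0) :
    ‖‖z‖⁻¹ • z - ‖y‖⁻¹ • y‖ ≤ 2 * ‖z - y‖ / ‖z‖ := by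
  have hz0 : (0 : ℝ) < ‖z‖ := norm_pos_iff.mpr hz
  have hy0 : (0 : ℝ) < ‖y‖ := norm_pos_iff.mpr hy
  have decomp : ‖z‖⁻¹ • z - ‖y‖⁻¹ • y = ‖z‖⁻¹ • (z - y) + (‖z‖⁻¹ - ‖y‖⁻¹) • y := by
    rw [smul_sub, sub_smul]
    abel
  rw [decomp]
  have h1 : ‖‖z‖⁻¹ • (z - y)‖ = ‖z - y‖ / ‖z‖ := by
    rw [norm_smul, norm_inv, norm_norm, inv_mul_eq_div]
  have h2 : ‖(‖z‖⁻¹ - ‖y‖⁻¹) • y‖ ≤ ‖z - y‖ / ‖z‖ := by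
    rw [norm_smul, Real.norm_eq_abs]
    have e : ‖z‖⁻¹ - ‖y‖⁻¹ = (‖y‖ - ‖z‖) / (‖z‖ * ‖y‖) := by
      field_simp
    have hle : |‖y‖ - ‖z‖| ≤ ‖z - y‖ := by
      rw [abs_sub_comm]
      exact abs_norm_sub_norm_le z y
    calc |‖z‖⁻¹ - ‖y‖⁻¹| * ‖y‖ = |‖y‖ - ‖z‖| / (‖z‖ * ‖y‖) * ‖y‖ := by
          rw [e, abs_div, abs_of_pos (mul_pos hz0 hy0)]
      _ = |‖y‖ - ‖z‖| / ‖z‖ := by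
          field_simp
      _ ≤ ‖z - y‖ / ‖z‖ := by gcongr
  calc ‖‖z‖⁻¹ • (z - y) + (‖z‖⁻¹ - ‖y‖⁻¹) • y‖
      ≤ ‖‖z‖⁻¹ • (z - y)‖ + ‖(‖z‖⁻¹ - ‖y‖⁻¹) • y‖ := norm_add_le _ _
    _ ≤ ‖z - y‖ / ‖z‖ + ‖z - y‖ / ‖z‖ := by
        rw [h1]
        exact add_le_add le_rfl h2
    _ = 2 * ‖z - y‖ / ‖z‖ := by ring

lemma mem_ES_of_gen {S : Set (Submodule ℝ (X d))} {f : BoundedContinuousFunction (X d) ℂ}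
    (hf : f ∈ projGen S) : f ∈ ES S :=
  StarSubalgebra.le_topologicalClosure _ (StarAlgebra.subset_adjoin ℂ _ hf)

lemma ttt_self_of_proj {a : X d} {Y : Submodule ℝ (X d)} (haY : a ∈ Y)
    {f : BoundedContinuousFunction (X d) ℂ} {g : BoundedContinuousFunction (↥Yᗮ) ℂ}
    (hfg : ∀ x : X d, f x = g (Yᗮ.orthogonalProjection x)) :
    TranslatesTendTo a f f := by
  have hproj : Yᗮ.orthogonalProjection a = 0 :=
    Submodule.orthogonalProjectionOnto_apply_of_mem_orthogonal
      (Y.le_orthogonal_orthogonal haY)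
  refine ttt_of_eq fun r x => ?_
  rw [hfg, hfg, map_add, _root_.map_smul, hproj, smul_zero, add_zero]

lemma gen_mem (S : Set (Submodule ℝ (X d))) (a : X d)
    {f : BoundedContinuousFunction (X d) ℂ} (hf : f ∈ projGen S) :
    ∃ g, g ∈ ES {Y ∈ S | a ∈ Y} ∧ TranslatesTendTo a f g := by
  obtain ⟨Y, hY, g, ⟨h, hcont, hrad⟩, hfg⟩ := hf
  by_cases haY : a ∈ Y
  · exact ⟨f, mem_ES_of_gen ⟨Y, ⟨hY, haY⟩, g, ⟨h, hcont, hrad⟩, hfg⟩,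
      ttt_self_of_proj haY hfg⟩
  · set b : ↥Yᗮ := Yᗮ.orthogonalProjection a with hbdef
    have hb0 : b ≠ 0 := by
      intro h0
      apply haY
      have h1 : a ∈ Yᗮᗮ := Submodule.orthogonalProjectionOnto_eq_zero_iff.mp h0
      rwa [Submodule.orthogonal_orthogonal] at h1
    have hbn : (0 : ℝ) < ‖b‖ := norm_pos_iff.mpr hb0
    set u : ↥Yᗮ := ‖b‖⁻¹ • b with hudef
    set c : ℂ := h u with hcdef
    refine ⟨BoundedContinuousFunction.const (X d) c, ?_, ?_⟩
    · have hconst : BoundedContinuousFunction.const (X d) c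
          = algebraMap ℂ (BoundedContinuousFunction (X d) ℂ) c := by
        ext x
        simp [BoundedContinuousFunction.algebraMap_apply]
      rw [hconst]
      exact (ES _).algebraMap_mem c
    · rw [ttt_iff]
      intro C hC ε hε
      obtain ⟨M, hM0, hM⟩ : ∃ M : ℝ, 0 ≤ M ∧
          ∀ x ∈ C, ‖(Yᗮ.orthogonalProjection x : ↥Yᗮ)‖ ≤ M := by
        have hco : Continuous fun x : X d => ‖(Yᗮ.orthogonalProjection x : ↥Yᗮ)‖ :=
          (Yᗮ.orthogonalProjection).continuous.norm
        obtain ⟨M, hMub⟩ := (hC.bddAbove_image hco.continuousOn)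
        exact ⟨max M 0, le_max_right _ _,
          fun x hx => le_trans (hMub (Set.mem_image_of_mem _ hx)) (le_max_left _ _)⟩
      obtain ⟨δ, hδ0, hδ⟩ : ∃ δ > 0, ∀ v : ↥Yᗮ, dist v u < δ → dist (h v) (h u) < ε / 2 := by
        obtain ⟨δ, hδ0, H⟩ := Metric.continuousAt_iff.mp (hcont.continuousAt (x := u))
          (ε / 2) (by positivity)
        exact ⟨δ, hδ0, fun v hv => H hv⟩
      obtain ⟨R, hR0, hR⟩ := hrad (ε / 2) (by positivity)
      set K := max R (1 + 2 * M / δ) with hK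
      have hK0 : 0 < K := lt_of_lt_of_le hR0 (le_max_left _ _)
      filter_upwards [eventually_ge_atTop ((M + K) / ‖b‖)] with r hr
      intro x hx
      have hrpos : 0 < r := lt_of_lt_of_le (by positivity) hr
      set w : ↥Yᗮ := Yᗮ.orthogonalProjection x with hwdef
      set z : ↥Yᗮ := w + r • b with hzdef
      have hfx : f (x + r • a) = g z := by
        rw [hfg]
        congr 1
        rw [map_add, _root_.map_smul]
      have hwM : ‖w‖ ≤ M := hM x hx
      have hzlb : K ≤ ‖z‖ := by
        have h1 : M + K ≤ r * ‖b‖ := (div_le_iff₀ hbn).mp hr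
        have h2 : ‖(r • b : ↥Yᗮ)‖ = r * ‖b‖ := by
          rw [norm_smul, Real.norm_eq_abs, abs_of_pos hrpos]
        have h3 : ‖(r • b : ↥Yᗮ)‖ ≤ ‖z‖ + ‖w‖ := by
          have h4 : (r • b : ↥Yᗮ) = z - w := by rw [hzdef]; abel
          rw [h4]
          exact norm_sub_le z w
        rw [h2] at h3
        linarith
      have hzpos : (0 : ℝ) < ‖z‖ := lt_of_lt_of_le hK0 hzlb
      have hz0 : z ≠ 0 := by
        intro h0
        rw [h0, norm_zero] at hzpos
        exact lt_irrefl 0 hzpos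
      have hzR : R ≤ ‖z‖ := le_trans (le_max_left _ _) hzlb
      have hzd : 1 + 2 * M / δ ≤ ‖z‖ := le_trans (le_max_right _ _) hzlb
      have hy0 : (r • b : ↥Yᗮ) ≠ 0 := smul_ne_zero (ne_of_gt hrpos) hb0
      have hyu : ‖(r • b : ↥Yᗮ)‖⁻¹ • (r • b : ↥Yᗮ) = u := by
        rw [norm_smul, Real.norm_eq_abs, abs_of_pos hrpos, smul_smul, hudef]
        congr 1
        rw [mul_inv, mul_comm, ← mul_assoc, mul_inv_cancel₀ hrpos.ne', one_mul]
      have hdistu : dist (‖z‖⁻¹ • z) u < δ := by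
        rw [dist_eq_norm, ← hyu]
        refine lt_of_le_of_lt (unit_vec_dist hz0 hy0) ?_
        have hzw : z - r • b = w := by rw [hzdef]; abel
        rw [hzw]
        have hle1 : 2 * ‖w‖ / ‖z‖ ≤ 2 * M / ‖z‖ := by gcongr
        refine lt_of_le_of_lt hle1 ?_
        rw [div_lt_iff₀ hzpos]
        have hle2 : δ * (1 + 2 * M / δ) ≤ δ * ‖z‖ :=
          mul_le_mul_of_nonneg_left hzd hδ0.le
        have e : δ * (1 + 2 * M / δ) = δ + 2 * M := by field_simp
        linarith
      have hgz : ‖g z - h (‖z‖⁻¹ • z)‖ < ε / 2 := hR z hzR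
      have hgoal : dist c (g z) < ε := by
        calc dist c (g z) ≤ dist c (h (‖z‖⁻¹ • z)) + dist (h (‖z‖⁻¹ • z)) (g z) :=
              dist_triangle _ _ _
          _ < ε / 2 + ε / 2 := by
              refine add_lt_add ?_ ?_
              · rw [hcdef, dist_comm]
                exact hδ _ hdistu
              · rw [dist_eq_norm, ← norm_neg, neg_sub]
                exact hgz
          _ = ε := add_halves ε
      simpa [hfx] using hgoal


lemma ES_isClosed (S : Set (Submodule ℝ (X d))) :
    IsClosed ((ES S : Set (BoundedContinuousFunction (X d) ℂ))) :=
  StarSubalgebra.isClosed_topologicalClosure _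

def tauAlg (S : Set (Submodule ℝ (X d))) (a : X d) :
    StarSubalgebra ℂ (BoundedContinuousFunction (X d) ℂ) where
  carrier := {f | ∃ g, g ∈ ES {Y ∈ S | a ∈ Y} ∧ TranslatesTendTo a f g}
  mul_mem' := fun ⟨g₁, hg₁, h1⟩ ⟨g₂, hg₂, h2⟩ => ⟨g₁ * g₂, mul_mem hg₁ hg₂, ttt_mul h1 h2⟩
  add_mem' := fun ⟨g₁, hg₁, h1⟩ ⟨g₂, hg₂, h2⟩ => ⟨g₁ + g₂, add_mem hg₁ hg₂, ttt_add h1 h2⟩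
  one_mem' := ⟨1, one_mem _, ttt_of_eq fun r x => rfl⟩
  zero_mem' := ⟨0, zero_mem _, ttt_of_eq fun r x => rfl⟩
  algebraMap_mem' := fun c => ⟨algebraMap ℂ _ c, (ES _).algebraMap_mem c,
    ttt_of_eq fun r x => rfl⟩
  star_mem' := fun ⟨g, hg, h1⟩ => ⟨star g, star_mem hg, ttt_star h1⟩

set_option synthInstance.maxHeartbeats 1000000 in
lemma tauAlg_closed (S : Set (Submodule ℝ (X d))) (a : X d) :
    IsClosed ((tauAlg S a : Set (BoundedContinuousFunction (X d) ℂ))) := by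
  refine IsSeqClosed.isClosed ?_
  intro u f hu hlim
  choose v hv1 hv2 using hu
  have hcau : CauchySeq v := by
    have hcu : CauchySeq u := hlim.cauchySeq
    rw [Metric.cauchySeq_iff] at hcu ⊢
    intro ε hε
    obtain ⟨N, hN⟩ := hcu ε hε
    refine ⟨N, fun m hm n hn => ?_⟩
    have hle : ‖v m - v n‖ ≤ ‖u m - u n‖ := ttt_norm_le (ttt_sub (hv2 m) (hv2 n))
    have := hN m hm n hn
    rw [dist_eq_norm] at this ⊢
    exact lt_of_le_of_lt hle this
  obtain ⟨g, hg⟩ := cauchySeq_tendsto_of_complete hcau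
  exact ⟨g, (ES_isClosed _).mem_of_tendsto hg (Eventually.of_forall hv1),
    ttt_of_tendsto hv2 hlim hg⟩

lemma ES_le_tauAlg (S : Set (Submodule ℝ (X d))) (a : X d) :
    ES S ≤ tauAlg S a :=
  StarSubalgebra.topologicalClosure_minimal
    (StarAlgebra.adjoin_le fun f hf => gen_mem S a hf) (tauAlg_closed S a)

def invAlg (a : X d) : StarSubalgebra ℂ (BoundedContinuousFunction (X d) ℂ) where
  carrier := {f | TranslatesTendTo a f f}
  mul_mem' := fun h1 h2 => ttt_mul h1 h2
  add_mem' := fun h1 h2 => ttt_add h1 h2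
  one_mem' := ttt_of_eq fun r x => rfl
  zero_mem' := ttt_of_eq fun r x => rfl
  algebraMap_mem' := fun c => ttt_of_eq fun r x => rfl
  star_mem' := fun h1 => ttt_star h1

set_option synthInstance.maxHeartbeats 1000000 in
lemma invAlg_closed (a : X d) :
    IsClosed ((invAlg a : Set (BoundedContinuousFunction (X d) ℂ))) := by
  refine IsSeqClosed.isClosed ?_
  intro u f hu hlim
  exact ttt_of_tendsto hu hlim hlim

lemma ES_le_invAlg (S : Set (Submodule ℝ (X d))) (a : X d) :
    ES {Y ∈ S | a ∈ Y} ≤ invAlg a := by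
  refine StarSubalgebra.topologicalClosure_minimal
    (StarAlgebra.adjoin_le fun f hf => ?_) (invAlg_closed a)
  obtain ⟨Y, ⟨hY, haY⟩, g, hg, hfg⟩ := hf
  exact ttt_self_of_proj haY hfg

open scoped Classical in
def tau0 (S : Set (Submodule ℝ (X d))) (a : X d)
    (f : BoundedContinuousFunction (X d) ℂ) : BoundedContinuousFunction (X d) ℂ :=
  if h : ∃ g, g ∈ ES {Y ∈ S | a ∈ Y} ∧ TranslatesTendTo a f g then h.choose else 0

lemma tau0_spec {S : Set (Submodule ℝ (X d))} {a : X d}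
    {f : BoundedContinuousFunction (X d) ℂ} (hf : f ∈ tauAlg S a) :
    tau0 S a f ∈ ES {Y ∈ S | a ∈ Y} ∧ TranslatesTendTo a f (tau0 S a f) := by
  have h : ∃ g, g ∈ ES {Y ∈ S | a ∈ Y} ∧ TranslatesTendTo a f g := hf
  classical
  rw [tau0]
  rw [dif_pos h]
  exact ⟨h.choose_spec.1, h.choose_spec.2⟩

end TauProof

/-- Let `S` be a family of linear subspaces of `X`, `a ≠ 0`, and `S_a = {Y ∈ S : a ∈ Y}`.
For every `f ∈ E_S(X)` the translates `x ↦ f(x + ra)` converge, uniformly on compact sets as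
`r → +∞`, to a function `τ_a(f) ∈ E_{S_a}(X)` with `‖τ_a(f)‖ ≤ ‖f‖`; the resulting map
`τ_a : E_S(X) → E_{S_a}(X)` is a unital *-algebra homomorphism which restricts to the
identity on `E_{S_a}(X)`, so `τ_a` is a projection of `E_S(X)` onto `E_{S_a}(X)`. -/
theorem exists_tau (d : ℕ) (hd : 1 ≤ d) (S : Set (Submodule ℝ (X d)))
    (a : X d) (ha : a ≠ 0) :
    ∃ τ : ↥(ES S) →⋆ₐ[ℂ] BoundedContinuousFunction (X d) ℂ,
      ∀ f : ↥(ES S),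
        τ f ∈ ES {Y ∈ S | a ∈ Y} ∧
        TranslatesTendTo a (↑f) (τ f) ∧
        ‖τ f‖ ≤ ‖f‖ ∧
        ((f : BoundedContinuousFunction (X d) ℂ) ∈ ES {Y ∈ S | a ∈ Y} → τ f = ↑f) := by
  classical
  have hle := TauProof.ES_le_tauAlg S a
  have spec : ∀ f : ↥(ES S), TauProof.tau0 S a ↑f ∈ ES {Y ∈ S | a ∈ Y} ∧
      TranslatesTendTo a (↑f) (TauProof.tau0 S a ↑f) :=
    fun f => TauProof.tau0_spec (hle f.2)
  have uniq : ∀ (f : BoundedContinuousFunction (X d) ℂ) (_ : f ∈ ES S)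
      (g : BoundedContinuousFunction (X d) ℂ),
      TranslatesTendTo a f g → TauProof.tau0 S a f = g :=
    fun f hf g hg => TauProof.ttt_unique (TauProof.tau0_spec (hle hf)).2 hg
  refine ⟨{ toFun := fun f => TauProof.tau0 S a ↑f
          , map_one' := uniq 1 (one_mem _) 1 (TauProof.ttt_of_eq fun r x => rfl)
          , map_mul' := fun f g => uniq _ (mul_mem f.2 g.2) _
              (TauProof.ttt_mul (spec f).2 (spec g).2)
          , map_zero' := uniq 0 (zero_mem _) 0 (TauProof.ttt_of_eq fun r x => rfl)
          , map_add' := fun f g => uniq _ (add_mem f.2 g.2) _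
              (TauProof.ttt_add (spec f).2 (spec g).2)
          , commutes' := fun c => uniq _ ((ES S).algebraMap_mem c) _
              (TauProof.ttt_of_eq fun r x => rfl)
          , map_star' := fun f => uniq _ (star_mem f.2) _
              (TauProof.ttt_star (spec f).2) }, ?_⟩
  intro f
  refine ⟨(spec f).1, (spec f).2, TauProof.ttt_norm_le (spec f).2, fun hf => ?_⟩
  exact uniq ↑f f.2 ↑f (TauProof.ES_le_invAlg S a hf)
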